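/- arXiv:1612.00681 — 3 statements merged into one kernel-verified Lean document; each statement's English description precedes it below -/
import Mathlib

section
/- Let M = (m_{kl}) be a p×p matrix with positive entries satisfying (1/b) ≤ m_{ij}/m_{kl} ≤ b for all i,j,k,l (b > 1), let A be a p×p matrix with nonnegative entries and |A| > 0, and let v be a vector with nonnegative coordinates. Then |AMv| ≥ (|A||M|/(b p²)) |v|, where |v| = Σᵢ vᵢ and |AMv| is the L¹ norm of the vector AMv. -/
open Matrix Finset

/-- Sum of all entries of a matrix ("norm" `|A|`). -/
noncomputable def mnorm {p : ℕ} (A : Matrix (Fin p) (Fin p) ℝ) : ℝ := ∑ i, ∑ j, A i j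

/-- L¹ norm of a nonnegative vector. -/
noncomputable def vnorm {p : ℕ} (v : Fin p → ℝ) : ℝ := ∑ i, |v i|

/-- `|AMv| ≥ (|A||M|/(b p²)) |v|` for nonnegative `A`, `v` and `M` with bounded ratios. -/
theorem stmt_2 {p : ℕ} (hp : 1 ≤ p) (b : ℝ) (hb : 1 < b)
    (M : Matrix (Fin p) (Fin p) ℝ) (hMpos : ∀ i j, 0 < M i j)
    (hratio : ∀ i j k l, 1 / b ≤ M i j / M k l ∧ M i j / M k l ≤ b)
    (A : Matrix (Fin p) (Fin p) ℝ) (hA : ∀ i j, 0 ≤ A i j) (hAnorm : 0 < mnorm A)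
    (v : Fin p → ℝ) (hv : ∀ i, 0 ≤ v i) :
    mnorm A * mnorm M / (b * (p : ℝ) ^ 2) * vnorm v ≤ vnorm ((A * M).mulVec v) := by
  have hb0 : (0:ℝ) < b := lt_trans one_pos hb
  have hp0 : (0:ℝ) < (p:ℝ) := by exact_mod_cast hp
  set c : ℝ := mnorm M / (b * (p:ℝ)^2) with hc
  have hbound : ∀ j k, c ≤ M j k := by
    intro j k
    rw [hc, div_le_iff₀ (by positivity)]
    have key : ∀ j' k', M j' k' ≤ b * M j k := by
      intro j' k'
      have h := (hratio j' k' j k).2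
      rw [div_le_iff₀ (hMpos j k)] at h
      linarith
    calc mnorm M = ∑ j', ∑ k', M j' k' := rfl
      _ ≤ ∑ _j' : Fin p, ∑ _k' : Fin p, b * M j k := by
          apply Finset.sum_le_sum; intro j' _
          apply Finset.sum_le_sum; intro k' _
          exact key j' k'
      _ = M j k * (b * (p:ℝ)^2) := by
          simp [Finset.sum_const, Finset.card_univ]; ring
  have hvn : vnorm v = ∑ i, v i :=
    Finset.sum_congr rfl fun i _ => abs_of_nonneg (hv i)
  have hAM : ∀ i k, 0 ≤ (A * M) i k := by
    intro i k
    rw [Matrix.mul_apply]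
    exact Finset.sum_nonneg fun j _ => mul_nonneg (hA i j) (hMpos j k).le
  have hmv : ∀ i, 0 ≤ (A * M).mulVec v i := by
    intro i
    rw [Matrix.mulVec, dotProduct]
    exact Finset.sum_nonneg fun k _ => mul_nonneg (hAM i k) (hv k)
  have hrhs : vnorm ((A * M).mulVec v) = ∑ k, (∑ i, (A*M) i k) * v k := by
    unfold vnorm
    rw [Finset.sum_congr rfl fun i _ => abs_of_nonneg (hmv i)]
    change ∑ i, ∑ k, (A*M) i k * v k = _
    rw [Finset.sum_comm]
    simp [Finset.sum_mul]
  have hcol : ∀ k, mnorm A * c ≤ ∑ i, (A*M) i k := by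
    intro k
    have : ∑ i, (A*M) i k = ∑ i, ∑ j, A i j * M j k := rfl
    rw [this]
    calc mnorm A * c = ∑ i, ∑ j, A i j * c := by
          simp [mnorm, Finset.sum_mul]
      _ ≤ ∑ i, ∑ j, A i j * M j k := by
          apply Finset.sum_le_sum; intro i _
          apply Finset.sum_le_sum; intro j _
          exact mul_le_mul_of_nonneg_left (hbound j k) (hA i j)
  rw [hrhs, hvn]
  have : mnorm A * mnorm M / (b * (p:ℝ)^2) * ∑ i, v i = ∑ k, (mnorm A * c) * v k := by
    rw [hc, Finset.mul_sum]
    exact Finset.sum_congr rfl fun k _ => by ring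
  rw [this]
  apply Finset.sum_le_sum
  intro k _
  exact mul_le_mul_of_nonneg_right (hcol k) (hv k)
end

section
/- Let H be a probability generating function of a nonnegative-integer-valued random variable, i.e. H(z) = Σ_{k≥0} p_k z^k with p_k ≥ 0, Σ p_k = 1, and suppose H'(1) > 0 and H''(1) < ∞. Then for all z ∈ [0,1) with H(z) < 1, one has 0 ≤ 1/(1 − H(z)) − 1/(H'(1)(1 − z)) ≤ H''(1)/(H'(1))². -/
open Real


private noncomputable def gfU (z : ℝ) (n : ℕ) : ℝ := ∑ j ∈ Finset.range n, z ^ j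
private noncomputable def gfT (z : ℝ) (n : ℕ) : ℝ := ∑ j ∈ Finset.range n, gfU z j

private lemma gfU_nonneg {z : ℝ} (hz : 0 ≤ z) (n : ℕ) : 0 ≤ gfU z n :=
  Finset.sum_nonneg fun j _ => pow_nonneg hz j

private lemma gfT_nonneg {z : ℝ} (hz : 0 ≤ z) (n : ℕ) : 0 ≤ gfT z n :=
  Finset.sum_nonneg fun j _ => gfU_nonneg hz j

private lemma gfU_mul (z : ℝ) (n : ℕ) : (1 - z) * gfU z n = 1 - z ^ n := by
  have h := geom_sum_mul z n
  unfold gfU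
  linear_combination -h

private lemma gfU_le {z : ℝ} (hz0 : 0 ≤ z) (hz1 : z ≤ 1) (n : ℕ) : gfU z n ≤ n := by
  calc gfU z n ≤ ∑ j ∈ Finset.range n, 1 :=
        Finset.sum_le_sum fun j _ => pow_le_one₀ hz0 hz1
    _ = n := by simp

private lemma gfU_mono {z : ℝ} (hz : 0 ≤ z) {m n : ℕ} (h : m ≤ n) : gfU z m ≤ gfU z n :=
  Finset.sum_le_sum_of_subset_of_nonneg (Finset.range_subset_range.2 h)
    (fun j _ _ => pow_nonneg hz j)

private lemma gfT_mul (z : ℝ) (n : ℕ) : (1 - z) * gfT z n = n - gfU z n := by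
  induction n with
  | zero => simp [gfT, gfU]
  | succ n ih =>
      have h1 : gfT z (n + 1) = gfT z n + gfU z n := Finset.sum_range_succ _ _
      have h2 : gfU z (n + 1) = gfU z n + z ^ n := Finset.sum_range_succ _ _
      have h3 := gfU_mul z n
      rw [h1, h2]
      push_cast
      linarith [ih]

private lemma gfT_le {z : ℝ} (hz0 : 0 ≤ z) (hz1 : z ≤ 1) (n : ℕ) :
    gfT z n ≤ ((n : ℝ) - 1) * gfU z n := by
  induction n with
  | zero => simp [gfT, gfU]
  | succ n ih =>
      have h1 : gfT z (n + 1) = gfT z n + gfU z n := Finset.sum_range_succ _ _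
      have h2 : gfU z n ≤ gfU z (n + 1) := gfU_mono hz0 (Nat.le_succ n)
      have h3 : (0:ℝ) ≤ n := Nat.cast_nonneg n
      have h4 : (0:ℝ) ≤ gfU z n := gfU_nonneg hz0 n
      rw [h1]
      push_cast
      nlinarith [ih]

private lemma gfU_ratio {z : ℝ} (hz0 : 0 ≤ z) (hz1 : z ≤ 1) {l k : ℕ} (h : l ≤ k) :
    (l : ℝ) * gfU z k ≤ (k : ℝ) * gfU z l := by
  have hsplit : gfU z k - gfU z l = ∑ j ∈ Finset.Ico l k, z ^ j := by
    rw [Finset.sum_Ico_eq_sub _ h]; rfl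
  have hbound : ∑ j ∈ Finset.Ico l k, z ^ j ≤ ((k : ℝ) - l) * z ^ l := by
    have : ∑ j ∈ Finset.Ico l k, z ^ j ≤ (Finset.Ico l k).card • z ^ l :=
      Finset.sum_le_card_nsmul _ _ _ (fun j hj =>
        pow_le_pow_of_le_one hz0 hz1 (Finset.mem_Ico.1 hj).1)
    rwa [Nat.card_Ico, nsmul_eq_mul, Nat.cast_sub h] at this
  have hlow : (l : ℝ) * z ^ l ≤ gfU z l := by
    have : (Finset.range l).card • z ^ l ≤ ∑ j ∈ Finset.range l, z ^ j :=
      Finset.card_nsmul_le_sum _ _ _ (fun j hj =>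
        pow_le_pow_of_le_one hz0 hz1 (le_of_lt (Finset.mem_range.1 hj)))
    rwa [Finset.card_range, nsmul_eq_mul] at this
  have hkl : (l : ℝ) ≤ k := Nat.cast_le.2 h
  nlinarith [mul_nonneg (sub_nonneg.2 hkl) (sub_nonneg.2 hlow)]

private lemma gfKey {z : ℝ} (hz0 : 0 ≤ z) (hz1 : z ≤ 1) (k l : ℕ) :
    (k : ℝ) * gfT z l + (l : ℝ) * gfT z k ≤
      (k : ℝ) * ((k : ℝ) - 1) * gfU z l + (l : ℝ) * ((l : ℝ) - 1) * gfU z k := by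
  -- wlog l ≤ k
  rcases le_total l k with h | h
  · have h1 : (k : ℝ) * gfT z l ≤ (k : ℝ) * (((l : ℝ) - 1) * gfU z l) :=
      mul_le_mul_of_nonneg_left (gfT_le hz0 hz1 l) (Nat.cast_nonneg k)
    have h2 : (l : ℝ) * gfT z k ≤ (l : ℝ) * (((k : ℝ) - 1) * gfU z k) :=
      mul_le_mul_of_nonneg_left (gfT_le hz0 hz1 k) (Nat.cast_nonneg l)
    have h3 : (l : ℝ) * gfU z k ≤ (k : ℝ) * gfU z l := gfU_ratio hz0 hz1 h
    have hkl : (l : ℝ) ≤ k := Nat.cast_le.2 h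
    nlinarith [mul_nonneg (sub_nonneg.2 hkl) (sub_nonneg.2 h3)]
  · have h1 : (l : ℝ) * gfT z k ≤ (l : ℝ) * (((k : ℝ) - 1) * gfU z k) :=
      mul_le_mul_of_nonneg_left (gfT_le hz0 hz1 k) (Nat.cast_nonneg l)
    have h2 : (k : ℝ) * gfT z l ≤ (k : ℝ) * (((l : ℝ) - 1) * gfU z l) :=
      mul_le_mul_of_nonneg_left (gfT_le hz0 hz1 l) (Nat.cast_nonneg k)
    have h3 : (k : ℝ) * gfU z l ≤ (l : ℝ) * gfU z k := gfU_ratio hz0 hz1 h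
    have hkl : (k : ℝ) ≤ l := Nat.cast_le.2 h
    nlinarith [mul_nonneg (sub_nonneg.2 hkl) (sub_nonneg.2 h3)]

set_option maxHeartbeats 1000000 in
/-- Basic generating-function inequality: for a probability generating function
`H(z) = Σ p_k z^k` with `H'(1) > 0` and `H''(1) < ∞`, one has
`0 ≤ 1/(1 − H(z)) − 1/(H'(1)(1 − z)) ≤ H''(1)/H'(1)²` for `z ∈ [0,1)` with `H(z) < 1`. -/
theorem stmt_3 (q : ℕ → ℝ) (hq : ∀ k, 0 ≤ q k) (hsum : ∑' k, q k = 1)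
    (hm1sum : Summable fun k : ℕ => (k : ℝ) * q k)
    (hm2sum : Summable fun k : ℕ => (k : ℝ) * ((k : ℝ) - 1) * q k)
    (hm1pos : 0 < ∑' k : ℕ, (k : ℝ) * q k)
    (z : ℝ) (hz0 : 0 ≤ z) (hz1 : z < 1)
    (H : ℝ → ℝ) (hH : ∀ t, H t = ∑' k, q k * t ^ k)
    (hHz : H z < 1) :
    0 ≤ 1 / (1 - H z) - 1 / ((∑' k : ℕ, (k : ℝ) * q k) * (1 - z)) ∧
      1 / (1 - H z) - 1 / ((∑' k : ℕ, (k : ℝ) * q k) * (1 - z)) ≤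
        (∑' k : ℕ, (k : ℝ) * ((k : ℝ) - 1) * q k) / (∑' k : ℕ, (k : ℝ) * q k) ^ 2 := by
  have hz1' : z ≤ 1 := le_of_lt hz1
  have hzpos : (0:ℝ) < 1 - z := by linarith
  set m := ∑' k : ℕ, (k : ℝ) * q k with hm
  set b := ∑' k : ℕ, (k : ℝ) * ((k : ℝ) - 1) * q k with hb
  -- summability of q
  have hqs : Summable q := by
    by_contra h
    rw [tsum_eq_zero_of_not_summable h] at hsum
    norm_num at hsum
  have hqz : Summable fun k : ℕ => q k * z ^ k :=
    Summable.of_nonneg_of_le (fun k => mul_nonneg (hq k) (pow_nonneg hz0 k))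
      (fun k => mul_le_of_le_one_right (hq k) (pow_le_one₀ hz0 hz1')) hqs
  -- summability of q·U and q·T
  have hGnn : ∀ k, 0 ≤ q k * gfU z k := fun k => mul_nonneg (hq k) (gfU_nonneg hz0 k)
  have hgnn : ∀ k, 0 ≤ q k * gfT z k := fun k => mul_nonneg (hq k) (gfT_nonneg hz0 k)
  have hSU : Summable fun k : ℕ => q k * gfU z k :=
    Summable.of_nonneg_of_le hGnn
      (fun k => by nlinarith [gfU_le hz0 hz1' k, hq k]) hm1sum
  have hST : Summable fun k : ℕ => q k * gfT z k := by
    refine Summable.of_nonneg_of_le hgnn (fun k => ?_) hm2sum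
    have h1 : gfT z k ≤ ((k:ℝ) - 1) * gfU z k := gfT_le hz0 hz1' k
    have h2 : ((k:ℝ) - 1) * gfU z k ≤ (k:ℝ) * ((k:ℝ) - 1) := by
      rcases Nat.eq_zero_or_pos k with rfl | hk
      · simp [gfU]
      · have hk1 : (1:ℝ) ≤ k := by exact_mod_cast hk
        nlinarith [gfU_le hz0 hz1' k, gfU_nonneg hz0 k]
    nlinarith [hq k, gfT_nonneg hz0 k]
  set A := ∑' k : ℕ, q k * gfU z k with hA
  set C := ∑' k : ℕ, q k * gfT z k with hC
  have hAnn : 0 ≤ A := tsum_nonneg hGnn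
  -- 1 - H z = (1-z) * A
  have h1H : 1 - H z = (1 - z) * A := by
    have e1 : (1 - z) * A = ∑' k : ℕ, (q k - q k * z ^ k) := by
      rw [hA, ← tsum_mul_left]
      exact tsum_congr fun k => by linear_combination (q k) * gfU_mul z k
    rw [e1, Summable.tsum_sub hqs hqz, hsum, hH z]
  -- m - A = (1-z) * C
  have hmAC : m - A = (1 - z) * C := by
    rw [hm, hA, ← Summable.tsum_sub hm1sum hSU, hC, ← tsum_mul_left]
    exact tsum_congr fun k => by linear_combination (-(q k)) * gfT_mul z k
  -- A ≤ m
  have hAm : A ≤ m :=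
    Summable.tsum_le_tsum (fun k => by nlinarith [gfU_le hz0 hz1' k, hq k]) hSU hm1sum
  -- A > 0
  have hApos : 0 < A := by
    have h0 : 0 < (1 - z) * A := by rw [← h1H]; linarith
    nlinarith
  -- core inequality : m * C ≤ b * A
  have hbnn : ∀ k : ℕ, 0 ≤ (k : ℝ) * ((k : ℝ) - 1) * q k := by
    intro k
    rcases Nat.eq_zero_or_pos k with rfl | hk
    · simp
    · have hk1 : (1:ℝ) ≤ k := by exact_mod_cast hk
      exact mul_nonneg (mul_nonneg (Nat.cast_nonneg k) (by linarith)) (hq k)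
  have hfnn : ∀ k : ℕ, 0 ≤ (k : ℝ) * q k := fun k => mul_nonneg (Nat.cast_nonneg k) (hq k)
  have hcore : m * C ≤ b * A := by
    set Φ : ℕ × ℕ → ℝ := fun p => ((p.1 : ℝ) * q p.1) * (q p.2 * gfT z p.2) with hΦ
    set Ψ : ℕ × ℕ → ℝ := fun p =>
      ((p.1 : ℝ) * ((p.1 : ℝ) - 1) * q p.1) * (q p.2 * gfU z p.2) with hΨ
    have SΦ : Summable Φ := hm1sum.mul_of_nonneg hST hfnn hgnn
    have SΨ : Summable Ψ := hm2sum.mul_of_nonneg hSU hbnn hGnn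
    have SΦs : Summable fun p : ℕ × ℕ => Φ p.swap :=
      ((Equiv.prodComm ℕ ℕ).summable_iff).2 SΦ
    have SΨs : Summable fun p : ℕ × ℕ => Ψ p.swap :=
      ((Equiv.prodComm ℕ ℕ).summable_iff).2 SΨ
    have hmC : m * C = ∑' p : ℕ × ℕ, Φ p := Summable.tsum_mul_tsum hm1sum hST SΦ
    have hbA : b * A = ∑' p : ℕ × ℕ, Ψ p := Summable.tsum_mul_tsum hm2sum hSU SΨ
    have hpt : ∀ p : ℕ × ℕ, Φ p + Φ p.swap ≤ Ψ p + Ψ p.swap := by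
      rintro ⟨k, l⟩
      have hkey := gfKey hz0 hz1' k l
      have := mul_le_mul_of_nonneg_left hkey (mul_nonneg (hq k) (hq l))
      simp only [hΦ, hΨ, Prod.swap_prod_mk]
      linear_combination this
    have h2 : ∑' p : ℕ × ℕ, (Φ p + Φ p.swap) ≤ ∑' p : ℕ × ℕ, (Ψ p + Ψ p.swap) :=
      Summable.tsum_le_tsum hpt (SΦ.add SΦs) (SΨ.add SΨs)
    have eΦ : ∑' p : ℕ × ℕ, Φ p.swap = ∑' p : ℕ × ℕ, Φ p :=
      (Equiv.prodComm ℕ ℕ).tsum_eq Φ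
    have eΨ : ∑' p : ℕ × ℕ, Ψ p.swap = ∑' p : ℕ × ℕ, Ψ p :=
      (Equiv.prodComm ℕ ℕ).tsum_eq Ψ
    rw [Summable.tsum_add SΦ SΦs, Summable.tsum_add SΨ SΨs, eΦ, eΨ] at h2
    linarith [hmC, hbA, h2]
  -- final arithmetic
  have hmz : 0 < m * (1 - z) := mul_pos hm1pos hzpos
  have h1Hpos : 0 < 1 - H z := by linarith
  have hle : 1 - H z ≤ m * (1 - z) := by rw [h1H]; nlinarith
  constructor
  · have := one_div_le_one_div_of_le h1Hpos hle
    linarith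
  · have hkey : 1 / (1 - H z) - 1 / (m * (1 - z)) = C / (A * m) := by
      rw [h1H]
      have hzne : (1:ℝ) - z ≠ 0 := ne_of_gt hzpos
      have hAne : A ≠ 0 := ne_of_gt hApos
      have hmne : m ≠ 0 := ne_of_gt hm1pos
      field_simp
      linear_combination hmAC
    rw [hkey]
    rw [div_le_div_iff₀ (mul_pos hApos hm1pos) (pow_pos hm1pos 2)]
    nlinarith [hcore, hm1pos]
end

section
/- Under the same setup, the following telescoping identity holds for any s ∈ [0,1]ᵖ with all denominators nonzero: 1/(x, 1 − f_{0,n}(s)) = e^{−ln|AR_n(1−s)|} + Σ_{k=0}^{n−1} ψ_k(f_{k+1,n}(s)) e^{−ln|xR_k|}, where A is the diagonal matrix with diagonal x, and ψ_k(t) := |AR_k|/|AR_k(1 − f_k(t))| − |AR_k|/|AR_kM_k(1 − t)|. -/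
open Finset Matrix

/-- Multivariate probability generating function of a measure `Φ` on `ℕ₀ᵖ`. -/
noncomputable def pgf {p : ℕ} (Φ : (Fin p → ℕ) → ℝ) (s : Fin p → ℝ) : ℝ :=
  ∑' z : Fin p → ℕ, Φ z * ∏ j, s j ^ z j

/-- Mean matrix of a vector of generating functions. -/
noncomputable def meanM {p : ℕ} (Φ : Fin p → (Fin p → ℕ) → ℝ) : Matrix (Fin p) (Fin p) ℝ :=
  fun k l => ∑' z : Fin p → ℕ, Φ k z * (z l : ℝ)

lemma vnorm_nonneg {p : ℕ} (v : Fin p → ℝ) : 0 ≤ vnorm v :=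
  Finset.sum_nonneg fun i _ => abs_nonneg _

/-- The telescoping identity (`Represent`) behind Corollary `C_telescope`. -/
theorem stmt_8 {p : ℕ} (hp : 1 ≤ p) (n : ℕ)
    (Φ : ℕ → Fin p → (Fin p → ℕ) → ℝ)
    (hΦnn : ∀ m i z, 0 ≤ Φ m i z) (hΦprob : ∀ m i, ∑' z, Φ m i z = 1)
    (hmom : ∀ m i j, Summable fun z : Fin p → ℕ => Φ m i z * (z j : ℝ))
    (R : ℕ → Matrix (Fin p) (Fin p) ℝ) (hR0 : R 0 = 1)
    (hRsucc : ∀ k, R (k + 1) = R k * meanM (Φ k))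
    (comp : ℕ → (Fin p → ℝ) → (Fin p → ℝ))
    (s : Fin p → ℝ) (hs : ∀ j, 0 ≤ s j ∧ s j ≤ 1)
    (hcompn : comp n s = s)
    (hcomp : ∀ k, k < n → comp k s = fun i => pgf (Φ k i) (comp (k + 1) s))
    (x : Fin p → ℝ) (hx : ∀ i, 0 ≤ x i) (hxnorm : ∑ i, x i = 1)
    (A : Matrix (Fin p) (Fin p) ℝ) (hAdiag : A = Matrix.diagonal x)
    -- all denominators are nonzero:
    (h0 : (∑ i, x i * (1 - comp 0 s i)) ≠ 0)
    (hdenn : vnorm ((A * R n).mulVec fun j => 1 - s j) ≠ 0)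
    (hxR : ∀ k, k ≤ n → vnorm (Matrix.vecMul x (R k)) ≠ 0)
    (hden1 : ∀ k, k < n →
      vnorm ((A * R k).mulVec fun j => 1 - pgf (Φ k j) (comp (k + 1) s)) ≠ 0)
    (hden2 : ∀ k, k < n →
      vnorm ((A * R k * meanM (Φ k)).mulVec fun j => 1 - comp (k + 1) s j) ≠ 0) :
    1 / (∑ i, x i * (1 - comp 0 s i)) =
      Real.exp (-Real.log (vnorm ((A * R n).mulVec fun j => 1 - s j))) +
        ∑ k ∈ Finset.range n,
          (mnorm (A * R k) /
              vnorm ((A * R k).mulVec fun j => 1 - pgf (Φ k j) (comp (k + 1) s)) -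
            mnorm (A * R k) /
              vnorm ((A * R k * meanM (Φ k)).mulVec fun j => 1 - comp (k + 1) s j)) *
            Real.exp (-Real.log (vnorm (Matrix.vecMul x (R k)))) := by
  -- summability of Φ m i
  have hΦsum : ∀ m i, Summable (Φ m i) := by
    intro m i
    by_contra h
    have h1 := hΦprob m i
    rw [tsum_eq_zero_of_not_summable h] at h1
    norm_num at h1
  -- nonnegativity of mean matrices and R
  have hMnn : ∀ m i j, 0 ≤ meanM (Φ m) i j := fun m i j =>
    tsum_nonneg fun z => mul_nonneg (hΦnn m i z) (Nat.cast_nonneg _)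
  have hRnn : ∀ k i j, 0 ≤ R k i j := by
    intro k
    induction k with
    | zero =>
      intro i j
      rw [hR0]
      by_cases h : i = j <;> simp [Matrix.one_apply, h]
    | succ k ih =>
      intro i j
      rw [hRsucc, Matrix.mul_apply]
      exact Finset.sum_nonneg fun l _ => mul_nonneg (ih i l) (hMnn k l j)
  -- bounds on comp
  have hcb : ∀ d j, 0 ≤ comp (n - d) s j ∧ comp (n - d) s j ≤ 1 := by
    intro d
    induction d with
    | zero => simpa [hcompn] using hs
    | succ d ih =>
      by_cases hd : n ≤ d
      · have he : n - (d + 1) = n - d := by omega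
        rw [he]; exact ih
      · have h1 : n - (d + 1) < n := by omega
        have h2 : n - (d + 1) + 1 = n - d := by omega
        intro j
        rw [hcomp _ h1]
        simp only
        rw [h2, pgf]
        have hprod : ∀ z : Fin p → ℕ,
            0 ≤ Φ (n - (d+1)) j z * ∏ l, comp (n - d) s l ^ z l := fun z =>
          mul_nonneg (hΦnn _ _ z)
            (Finset.prod_nonneg fun l _ => pow_nonneg (ih l).1 _)
        have hle : ∀ z : Fin p → ℕ,
            Φ (n - (d+1)) j z * ∏ l, comp (n - d) s l ^ z l ≤ Φ (n - (d+1)) j z := by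
          intro z
          have : (∏ l, comp (n - d) s l ^ z l) ≤ 1 :=
            Finset.prod_le_one (fun l _ => pow_nonneg (ih l).1 _)
              (fun l _ => pow_le_one₀ (ih l).1 (ih l).2)
          exact mul_le_of_le_one_right (hΦnn _ _ z) this
        have hsum : Summable fun z : Fin p → ℕ =>
            Φ (n - (d+1)) j z * ∏ l, comp (n - d) s l ^ z l :=
          Summable.of_nonneg_of_le hprod hle (hΦsum _ _)
        constructor
        · exact tsum_nonneg hprod
        · calc (∑' z : Fin p → ℕ, Φ (n - (d+1)) j z * ∏ l, comp (n - d) s l ^ z l)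
              ≤ ∑' z, Φ (n - (d+1)) j z := Summable.tsum_le_tsum hle hsum (hΦsum _ _)
            _ = 1 := hΦprob _ _
  have hcball : ∀ k j, k ≤ n → 0 ≤ comp k s j ∧ comp k s j ≤ 1 := by
    intro k j hk
    have := hcb (n - k) j
    rwa [Nat.sub_sub_self hk] at this
  -- exp(-log c) = 1/c for positive c
  have hexp : ∀ c : ℝ, c ≠ 0 → 0 ≤ c → Real.exp (-Real.log c) = 1 / c := by
    intro c hc hc0
    rw [Real.exp_neg, Real.exp_log (lt_of_le_of_ne hc0 (Ne.symm hc)), one_div]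
  -- mnorm (A * R k) = vnorm (x ⬝ᵥ R k)
  have hck : ∀ k, mnorm (A * R k) = vnorm (Matrix.vecMul x (R k)) := by
    intro k
    unfold mnorm vnorm
    refine Finset.sum_comm.trans ?_
    refine Finset.sum_congr rfl fun j _ => ?_
    rw [abs_of_nonneg]
    · simp [hAdiag, Matrix.diagonal_mul, Matrix.vecMul, dotProduct]
    · simp only [Matrix.vecMul, dotProduct]
      exact Finset.sum_nonneg fun i _ => mul_nonneg (hx i) (hRnn k i j)
  -- each summand telescopes
  have hterm : ∀ k ∈ Finset.range n,
      (mnorm (A * R k) /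
          vnorm ((A * R k).mulVec fun j => 1 - pgf (Φ k j) (comp (k + 1) s)) -
        mnorm (A * R k) /
          vnorm ((A * R k * meanM (Φ k)).mulVec fun j => 1 - comp (k + 1) s j)) *
        Real.exp (-Real.log (vnorm (Matrix.vecMul x (R k)))) =
      (1 / vnorm ((A * R k).mulVec fun j => 1 - comp k s j)) -
      (1 / vnorm ((A * R (k+1)).mulVec fun j => 1 - comp (k+1) s j)) := by
    intro k hk
    rw [Finset.mem_range] at hk
    have hb : (fun j => 1 - pgf (Φ k j) (comp (k + 1) s)) = fun j => 1 - comp k s j := by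
      rw [hcomp k hk]
    have hd : A * R k * meanM (Φ k) = A * R (k + 1) := by
      rw [hRsucc k, mul_assoc]
    rw [hb, hd, hck k, hexp _ (hxR k hk.le) (vnorm_nonneg _)]
    have hbne : vnorm ((A * R k).mulVec fun j => 1 - comp k s j) ≠ 0 := by
      have := hden1 k hk; rwa [hb] at this
    have hdne : vnorm ((A * R (k+1)).mulVec fun j => 1 - comp (k+1) s j) ≠ 0 := by
      have := hden2 k hk; rwa [hd] at this
    have hcne : vnorm (Matrix.vecMul x (R k)) ≠ 0 := hxR k hk.le
    field_simp
  rw [Finset.sum_congr rfl hterm,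
    Finset.sum_range_sub' (fun k => 1 / vnorm ((A * R k).mulVec fun j => 1 - comp k s j)) n]
  have hsn : (fun j => 1 - comp n s j) = fun j => 1 - s j := by rw [hcompn]
  have h00 : (∑ i, x i * (1 - comp 0 s i)) =
      vnorm ((A * R 0).mulVec fun j => 1 - comp 0 s j) := by
    unfold vnorm
    refine Finset.sum_congr rfl fun i _ => ?_
    rw [hR0, mul_one, hAdiag, Matrix.mulVec_diagonal]
    rw [abs_of_nonneg (mul_nonneg (hx i) (by linarith [(hcball 0 i (Nat.zero_le n)).2]))]
  simp only [hsn]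
  rw [hexp _ hdenn (vnorm_nonneg _), h00]
  ring
end
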